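/- Let A be a binary linear code of length n and dimension K, let a ∈ F₂ⁿ, and for each i let dᵢ be the number of vectors of weight i in the coset A + a, Bᵢ the number of vectors of weight i in A⊥, and bᵢ the number of vectors of weight i in A⊥ that are orthogonal to a. Then as polynomials in X: Σᵢ dᵢ Xⁱ = 2^{K-n} Σᵢ (2bᵢ - Bᵢ)(1+X)^{n-i}(1-X)^i. -/
import Mathlib

open Polynomial Finset

open scoped Classical

/-- Hamming weight of a vector in F₂ⁿ. -/
def wt {n : ℕ} (v : Fin n → ZMod 2) : ℕ :=
  (Finset.univ.filter fun j => v j ≠ 0).card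

/-- Dual code: vectors orthogonal to every codeword. -/
def dualSet {n : ℕ} (A : Submodule (ZMod 2) (Fin n → ZMod 2)) : Set (Fin n → ZMod 2) :=
  {u | ∀ c ∈ A, ∑ j, u j * c j = 0}

namespace AM

variable {n : ℕ}

def dot (u v : Fin n → ZMod 2) : ZMod 2 := ∑ j, u j * v j

def χ (t : ZMod 2) : ℚ := if t = 0 then 1 else -1

lemma zmod2 (t : ZMod 2) : t = 0 ∨ t = 1 := by revert t; decide

lemma chi_add (s t : ZMod 2) : χ (s + t) = χ s * χ t := by
  have h2 : (1 + 1 : ZMod 2) = 0 := by decide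
  rcases zmod2 s with rfl | rfl <;> rcases zmod2 t with rfl | rfl <;>
    simp [χ, h2]

lemma chi_zero : χ 0 = 1 := rfl
lemma chi_one : χ 1 = -1 := rfl

lemma chi_sum {ι : Type*} (t : Finset ι) (f : ι → ZMod 2) :
    χ (∑ j ∈ t, f j) = ∏ j ∈ t, χ (f j) := by
  induction t using Finset.cons_induction with
  | empty => simp [chi_zero]
  | cons j t hj ih => rw [Finset.sum_cons, Finset.prod_cons, chi_add, ih]

lemma dot_comm (u v : Fin n → ZMod 2) : dot u v = dot v u := by
  unfold dot; exact Finset.sum_congr rfl fun j _ => mul_comm _ _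

lemma dot_add_left (u u' w : Fin n → ZMod 2) : dot (u + u') w = dot u w + dot u' w := by
  unfold dot
  rw [← Finset.sum_add_distrib]
  exact Finset.sum_congr rfl fun j _ => by simp [add_mul]

lemma dot_add_right (u v w : Fin n → ZMod 2) : dot u (v + w) = dot u v + dot u w := by
  rw [dot_comm, dot_add_left, dot_comm v u, dot_comm w u]

def dualSub (A : Submodule (ZMod 2) (Fin n → ZMod 2)) : Submodule (ZMod 2) (Fin n → ZMod 2) where
  carrier := dualSet A
  add_mem' := by
    intro u v hu hv c hc
    have : ∑ j, (u + v) j * c j = (∑ j, u j * c j) + ∑ j, v j * c j := by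
      rw [← Finset.sum_add_distrib]
      exact Finset.sum_congr rfl fun j _ => by simp [add_mul]
    rw [this, hu c hc, hv c hc, add_zero]
  zero_mem' := by intro c hc; simp
  smul_mem' := by
    intro r u hu c hc
    have : ∑ j, (r • u) j * c j = r * ∑ j, u j * c j := by
      rw [Finset.mul_sum]
      exact Finset.sum_congr rfl fun j _ => by simp [mul_assoc]
    rw [this, hu c hc, mul_zero]

lemma mem_dualSub {A : Submodule (ZMod 2) (Fin n → ZMod 2)} {u : Fin n → ZMod 2} :
    u ∈ dualSub A ↔ ∀ c ∈ A, dot u c = 0 := Iff.rfl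

lemma self_add_self (u : Fin n → ZMod 2) : u + u = 0 := by
  ext j
  have : ∀ t : ZMod 2, t + t = 0 := by decide
  exact this (u j)

lemma sum_shift (G : Submodule (ZMod 2) (Fin n → ZMod 2)) {u0 : Fin n → ZMod 2} (h0 : u0 ∈ G)
    (f : (Fin n → ZMod 2) → ℚ) :
    ∑ u ∈ univ.filter (· ∈ G), f (u + u0) = ∑ u ∈ univ.filter (· ∈ G), f u := by
  apply Finset.sum_nbij' (i := fun u => u + u0) (j := fun u => u + u0)
  · intro u hu
    simp only [Finset.mem_filter, Finset.mem_univ, true_and] at hu ⊢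
    exact G.add_mem hu h0
  · intro u hu
    simp only [Finset.mem_filter, Finset.mem_univ, true_and] at hu ⊢
    exact G.add_mem hu h0
  · intro u _; rw [add_assoc, self_add_self, add_zero]
  · intro u _; rw [add_assoc, self_add_self, add_zero]
  · intro u _; rfl

lemma sum_chi_eq_card (G : Submodule (ZMod 2) (Fin n → ZMod 2)) (w : Fin n → ZMod 2)
    (h : ∀ u ∈ G, dot u w = 0) :
    ∑ u ∈ univ.filter (· ∈ G), χ (dot u w) = (univ.filter (· ∈ G)).card := by
  rw [Finset.sum_congr rfl (fun u hu => by
    rw [h u (by simpa using hu), chi_zero])]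
  simp

lemma sum_chi_eq_zero (G : Submodule (ZMod 2) (Fin n → ZMod 2)) (w : Fin n → ZMod 2)
    (h : ¬ ∀ u ∈ G, dot u w = 0) :
    ∑ u ∈ univ.filter (· ∈ G), χ (dot u w) = 0 := by
  push_neg at h
  obtain ⟨u0, h0, hne⟩ := h
  have hd : dot u0 w = 1 := (zmod2 _).resolve_left hne
  have key : ∑ u ∈ univ.filter (· ∈ G), χ (dot u w)
      = - ∑ u ∈ univ.filter (· ∈ G), χ (dot u w) := by
    conv_lhs => rw [← sum_shift G h0 (fun u => χ (dot u w))]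
    rw [← Finset.sum_neg_distrib]
    exact Finset.sum_congr rfl fun u _ => by
      rw [dot_add_left, chi_add, hd, chi_one]; ring
  linarith

lemma dot_single (j : Fin n) (w : Fin n → ZMod 2) : dot (Pi.single j 1) w = w j := by
  unfold dot
  rw [Finset.sum_eq_single j]
  · simp
  · intro i _ hij; simp [Pi.single_apply, hij]
  · simp

lemma forall_dot_zero {w : Fin n → ZMod 2} (h : ∀ u, dot u w = 0) : w = 0 := by
  funext j
  have := h (Pi.single j 1)
  rwa [dot_single] at this

lemma sum_chi_univ (w : Fin n → ZMod 2) :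
    ∑ u : Fin n → ZMod 2, χ (dot u w) = if w = 0 then (2 ^ n : ℚ) else 0 := by
  have hfilt : (univ.filter (· ∈ (⊤ : Submodule (ZMod 2) (Fin n → ZMod 2)))) = univ := by
    simp
  by_cases hw : w = 0
  · subst hw
    have := sum_chi_eq_card (⊤ : Submodule (ZMod 2) (Fin n → ZMod 2)) 0
      (fun u _ => by simp [dot])
    rw [hfilt] at this
    rw [this]
    simp [Fintype.card_fun]
  · have h : ¬ ∀ u ∈ (⊤ : Submodule (ZMod 2) (Fin n → ZMod 2)), dot u w = 0 := by
      intro hall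
      exact hw (forall_dot_zero fun u => hall u trivial)
    have := sum_chi_eq_zero (⊤ : Submodule (ZMod 2) (Fin n → ZMod 2)) w h
    rw [hfilt] at this
    rw [this, if_neg hw]

lemma card_mul_card (G : Submodule (ZMod 2) (Fin n → ZMod 2)) :
    (univ.filter (· ∈ G)).card * (univ.filter (· ∈ dualSub G)).card = 2 ^ n := by
  have key : ∑ u : Fin n → ZMod 2, ∑ w ∈ univ.filter (· ∈ G), χ (dot w u)
      = ((univ.filter (· ∈ G)).card * (univ.filter (· ∈ dualSub G)).card : ℚ) := by
    have step : ∀ u : Fin n → ZMod 2,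
        ∑ w ∈ univ.filter (· ∈ G), χ (dot w u)
          = if u ∈ dualSub G then ((univ.filter (· ∈ G)).card : ℚ) else 0 := by
      intro u
      by_cases hu : u ∈ dualSub G
      · rw [if_pos hu]
        exact sum_chi_eq_card G u (fun c hc => by rw [dot_comm]; exact hu c hc)
      · rw [if_neg hu]
        apply sum_chi_eq_zero G u
        intro hall
        refine hu (fun c hc => ?_)
        show dot u c = 0
        rw [dot_comm]; exact hall c hc
    rw [Finset.sum_congr rfl (fun u _ => step u), ← Finset.sum_filter,
      Finset.sum_const, nsmul_eq_mul]
    ring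
  have key2 : ∑ u : Fin n → ZMod 2, ∑ w ∈ univ.filter (· ∈ G), χ (dot w u)
      = (2 ^ n : ℚ) := by
    rw [Finset.sum_comm]
    have : ∀ w ∈ univ.filter (· ∈ G), ∑ u : Fin n → ZMod 2, χ (dot w u)
        = if w = 0 then (2 ^ n : ℚ) else 0 := by
      intro w _
      rw [← sum_chi_univ w]
      exact Finset.sum_congr rfl fun u _ => by rw [dot_comm]
    rw [Finset.sum_congr rfl this, Finset.sum_ite_eq' _ 0 (fun _ => (2 ^ n : ℚ))]
    rw [if_pos (by simp [G.zero_mem])]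
  have := key.symm.trans key2
  exact_mod_cast this

lemma filt_nonempty_card_pos (G : Submodule (ZMod 2) (Fin n → ZMod 2)) :
    0 < (univ.filter (· ∈ G)).card :=
  Finset.card_pos.mpr ⟨0, by simp [G.zero_mem]⟩

/-- Double dual: if `w ∉ A`, some dual vector pairs nontrivially with `w`. -/
lemma exists_dual_pair {A : Submodule (ZMod 2) (Fin n → ZMod 2)} {w : Fin n → ZMod 2}
    (hw : w ∉ A) : ¬ ∀ u ∈ dualSub A, dot u w = 0 := by
  intro hall
  -- w is in the double dual
  have hsub : univ.filter (· ∈ A) ⊆ univ.filter (· ∈ dualSub (dualSub A)) := by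
    intro c hc
    simp only [Finset.mem_filter, Finset.mem_univ, true_and] at hc ⊢
    intro u hu
    show dot c u = 0
    rw [dot_comm]
    exact hu c hc
  have h1 := card_mul_card A
  have h2 := card_mul_card (dualSub A)
  have hDpos := filt_nonempty_card_pos (dualSub A)
  have hcards : (univ.filter (· ∈ dualSub (dualSub A))).card
      = (univ.filter (· ∈ A)).card := by
    have := h1.trans h2.symm
    rw [mul_comm] at this
    exact (Nat.eq_of_mul_eq_mul_left hDpos this).symm
  have heq : univ.filter (· ∈ A) = univ.filter (· ∈ dualSub (dualSub A)) :=
    Finset.eq_of_subset_of_card_le hsub (le_of_eq hcards)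
  have hwdd : w ∈ dualSub (dualSub A) := fun u hu => by
    show dot w u = 0
    rw [dot_comm]
    exact hall u hu
  have : w ∈ univ.filter (· ∈ A) := by
    rw [heq]; simp only [Finset.mem_filter, Finset.mem_univ, true_and]; exact hwdd
  simp only [Finset.mem_filter, Finset.mem_univ, true_and] at this
  exact hw this

lemma card_filt (A : Submodule (ZMod 2) (Fin n → ZMod 2)) :
    (univ.filter (· ∈ A)).card = 2 ^ (Module.finrank (ZMod 2) A) := by
  rw [← Fintype.card_subtype]
  have : Fintype.card A = Fintype.card (ZMod 2) ^ (Module.finrank (ZMod 2) A) :=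
    Module.card_eq_pow_finrank
  simpa [ZMod.card] using this

lemma finrank_le_n (A : Submodule (ZMod 2) (Fin n → ZMod 2)) :
    Module.finrank (ZMod 2) A ≤ n := by
  have h := Submodule.finrank_le A
  rwa [Module.finrank_fin_fun] at h

lemma card_dual (A : Submodule (ZMod 2) (Fin n → ZMod 2)) :
    (univ.filter (· ∈ dualSub A)).card = 2 ^ (n - Module.finrank (ZMod 2) A) := by
  have h1 := card_mul_card A
  rw [card_filt] at h1
  have hle := finrank_le_n A
  have : (2 : ℕ) ^ Module.finrank (ZMod 2) A * 2 ^ (n - Module.finrank (ZMod 2) A)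
      = 2 ^ n := by
    rw [← pow_add]
    congr 1
    omega
  rw [← this] at h1
  exact Nat.eq_of_mul_eq_mul_left (by positivity) h1

/-- The key character sum over the dual code. -/
lemma dual_char_sum (A : Submodule (ZMod 2) (Fin n → ZMod 2)) (w : Fin n → ZMod 2) :
    ∑ u ∈ univ.filter (· ∈ dualSub A), χ (dot u w)
      = if w ∈ A then ((2 : ℚ) ^ (n - Module.finrank (ZMod 2) A)) else 0 := by
  by_cases hw : w ∈ A
  · rw [if_pos hw, sum_chi_eq_card (dualSub A) w (fun u hu => hu w hw), card_dual]
    push_cast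
    ring
  · rw [if_neg hw, sum_chi_eq_zero (dualSub A) w (exists_dual_pair hw)]

lemma wt_le (v : Fin n → ZMod 2) : wt v ≤ n := by
  unfold wt
  calc (univ.filter fun j => v j ≠ 0).card ≤ univ.card := Finset.card_filter_le _ _
  _ = n := by simp

lemma prod_expand (u : Fin n → ZMod 2) :
    (1 + X : ℚ[X]) ^ (n - wt u) * (1 - X) ^ wt u
      = ∑ v : Fin n → ZMod 2, C (χ (dot u v)) * X ^ wt v := by
  have ha : ∏ j : Fin n, (1 + C (χ (u j)) * X : ℚ[X])
      = (1 + X) ^ (n - wt u) * (1 - X) ^ wt u := by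
    rw [← Finset.prod_filter_mul_prod_filter_not univ (fun j => u j ≠ 0)]
    have h1 : ∀ j ∈ univ.filter (fun j => u j ≠ 0),
        (1 + C (χ (u j)) * X : ℚ[X]) = 1 - X := by
      intro j hj
      simp only [Finset.mem_filter] at hj
      have : u j = 1 := (zmod2 _).resolve_left hj.2
      rw [this, chi_one]
      simp
      ring
    have h2 : ∀ j ∈ univ.filter (fun j => ¬ u j ≠ 0),
        (1 + C (χ (u j)) * X : ℚ[X]) = 1 + X := by
      intro j hj
      simp only [Finset.mem_filter, not_not] at hj
      rw [hj.2, chi_zero]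
      simp
    rw [Finset.prod_congr rfl h1, Finset.prod_congr rfl h2,
      Finset.prod_const, Finset.prod_const]
    have hc1 : (univ.filter fun j => u j ≠ 0).card = wt u := rfl
    have hc2 : (univ.filter fun j => ¬ u j ≠ 0).card = n - wt u := by
      have := Finset.card_filter_add_card_filter_not
        (s := (univ : Finset (Fin n))) (p := fun j => u j ≠ 0)
      simp only [Finset.card_univ, Fintype.card_fin] at this
      omega
    rw [hc1, hc2, mul_comm]
  have hb : ∏ j : Fin n, (1 + C (χ (u j)) * X : ℚ[X])
      = ∑ v : Fin n → ZMod 2, C (χ (dot u v)) * X ^ wt v := by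
    have : ∀ j : Fin n, (1 + C (χ (u j)) * X : ℚ[X]) = C (χ (u j)) * X + 1 := fun j => by ring
    rw [Finset.prod_congr rfl (fun j _ => this j), Finset.prod_add]
    simp only [Finset.prod_const_one, mul_one]
    apply Finset.sum_nbij' (i := fun t => fun j => if j ∈ t then (1 : ZMod 2) else 0)
      (j := fun v => univ.filter fun j => v j ≠ 0)
    · intro t _; exact Finset.mem_univ _
    · intro v _; simp
    · intro t ht
      ext j
      simp only [Finset.mem_filter, Finset.mem_univ, true_and]
      by_cases hj : j ∈ t <;> simp [hj]
    · intro v _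
      funext j
      by_cases hj : v j = 0 <;> simp [hj, (zmod2 (v j)).resolve_left]
    · intro t ht
      have hwt : wt (fun j => if j ∈ t then (1 : ZMod 2) else 0) = t.card := by
        unfold wt
        congr 1
        ext j
        by_cases hj : j ∈ t <;> simp [hj]
      have hdot : dot u (fun j => if j ∈ t then (1 : ZMod 2) else 0) = ∑ j ∈ t, u j := by
        unfold dot
        calc ∑ j : Fin n, u j * (if j ∈ t then (1 : ZMod 2) else 0)
            = ∑ j : Fin n, if j ∈ t then u j else 0 :=
              Finset.sum_congr rfl fun j _ => by by_cases hj : j ∈ t <;> simp [hj]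
          _ = ∑ j ∈ t, u j := by rw [Finset.sum_ite_mem, Finset.univ_inter]
      rw [Finset.prod_mul_distrib, Finset.prod_const, ← map_prod, ← chi_sum, ← hdot, hwt]
  rw [← ha, hb]

lemma mem_dualSub_set {A : Submodule (ZMod 2) (Fin n → ZMod 2)} (u : Fin n → ZMod 2) :
    u ∈ dualSub A ↔ u ∈ dualSet A := Iff.rfl

lemma ncard_filter {α : Type*} [Fintype α] (P : α → Prop) :
    {v | P v}.ncard = (univ.filter P).card := by
  rw [← Set.ncard_coe_finset]
  congr 1
  ext v
  simp

end AM

open AM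

theorem assmus_mattson_coset_identity (n Kdim : ℕ)
    (A : Submodule (ZMod 2) (Fin n → ZMod 2))
    (hK : Module.finrank (ZMod 2) A = Kdim)
    (a : Fin n → ZMod 2)
    (d B b : ℕ → ℕ)
    (hd : ∀ i, d i = {v | (∃ c ∈ A, v = c + a) ∧ wt v = i}.ncard)
    (hB : ∀ i, B i = {u | u ∈ dualSet A ∧ wt u = i}.ncard)
    (hb : ∀ i, b i = {u | u ∈ dualSet A ∧ (∑ j, u j * a j) = 0 ∧ wt u = i}.ncard) :
    ∑ i ∈ Finset.range (n + 1), Polynomial.C ((d i : ℚ)) * Polynomial.X ^ i =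
      Polynomial.C ((2 : ℚ) ^ ((Kdim : ℤ) - (n : ℤ))) *
        ∑ i ∈ Finset.range (n + 1),
          Polynomial.C (2 * (b i : ℚ) - (B i : ℚ)) *
            (1 + Polynomial.X) ^ (n - i) * (1 - Polynomial.X) ^ i := by
  classical
  have hKn : Kdim ≤ n := hK ▸ finrank_le_n A
  set filtD := univ.filter (· ∈ dualSub A) with hfiltD
  set cosetF := univ.filter (fun v => v + a ∈ A) with hcosetF
  have hmaps : ∀ (S : Finset (Fin n → ZMod 2)), ∀ v ∈ S, wt v ∈ Finset.range (n+1) :=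
    fun S v _ => Finset.mem_range.mpr (Nat.lt_succ_of_le (wt_le v))
  -- coset membership characterization
  have hcosetiff : ∀ v : Fin n → ZMod 2, (∃ c ∈ A, v = c + a) ↔ v + a ∈ A := by
    intro v
    constructor
    · rintro ⟨c, hc, rfl⟩
      rwa [add_assoc, self_add_self, add_zero]
    · intro h
      exact ⟨v + a, h, by rw [add_assoc, self_add_self, add_zero]⟩
  -- Step A : LHS
  have hdi : ∀ i, (d i : ℚ) = ((cosetF.filter fun v => wt v = i).card : ℚ) := by
    intro i
    rw [hd i, ncard_filter]
    congr 2
    ext v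
    simp only [Finset.mem_filter, Finset.mem_univ, true_and, hcosetF, hcosetiff v]
  have hLHS : ∑ i ∈ Finset.range (n + 1), C ((d i : ℚ)) * X ^ i
      = ∑ v ∈ cosetF, (X : ℚ[X]) ^ wt v := by
    rw [← Finset.sum_fiberwise_of_maps_to (hmaps cosetF) (fun v => (X : ℚ[X]) ^ wt v)]
    refine Finset.sum_congr rfl fun i _ => ?_
    rw [Finset.sum_congr rfl (fun v hv => by rw [(Finset.mem_filter.mp hv).2]),
      Finset.sum_const, nsmul_eq_mul, hdi i]
    rw [map_natCast C]
  -- Step B : the per-weight coefficient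
  have hBbi : ∀ i, (2 * (b i : ℚ) - B i)
      = ∑ u ∈ filtD.filter (fun u => wt u = i), χ (dot u a) := by
    intro i
    have hBcard : (B i : ℚ) = ((filtD.filter fun u => wt u = i).card : ℚ) := by
      rw [hB i, ncard_filter]
      congr 2
      ext u
      simp only [Finset.mem_filter, Finset.mem_univ, true_and, hfiltD, mem_dualSub_set]
    have hbcard : (b i : ℚ)
        = (((filtD.filter fun u => wt u = i).filter fun u => dot u a = 0).card : ℚ) := by
      rw [hb i, ncard_filter]
      congr 2
      ext u
      simp only [Finset.mem_filter, Finset.mem_univ, true_and, hfiltD, mem_dualSub_set]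
      show (u ∈ dualSet A ∧ dot u a = 0 ∧ wt u = i) ↔ ((u ∈ dualSet A ∧ wt u = i) ∧ dot u a = 0)
      tauto
    have step : ∀ u ∈ filtD.filter (fun u => wt u = i),
        χ (dot u a) = (if dot u a = 0 then (2:ℚ) else 0) - 1 := by
      intro u _
      by_cases h : dot u a = 0 <;> simp [χ, h]
      norm_num
    rw [Finset.sum_congr rfl step, Finset.sum_sub_distrib, Finset.sum_const,
      ← Finset.sum_filter, Finset.sum_const, hBcard, hbcard]
    simp [nsmul_eq_mul]
    ring
  -- Step B' : rewrite the RHS sum as a sum over dual codewords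
  have hRHS1 : ∑ i ∈ Finset.range (n + 1),
        C (2 * (b i : ℚ) - (B i : ℚ)) * (1 + X) ^ (n - i) * (1 - X) ^ i
      = ∑ u ∈ filtD, C (χ (dot u a)) * ((1 + X : ℚ[X]) ^ (n - wt u) * (1 - X) ^ wt u) := by
    rw [← Finset.sum_fiberwise_of_maps_to (hmaps filtD)
      (fun u => C (χ (dot u a)) * ((1 + X : ℚ[X]) ^ (n - wt u) * (1 - X) ^ wt u))]
    refine Finset.sum_congr rfl fun i _ => ?_
    rw [Finset.sum_congr rfl (fun u hu => by rw [(Finset.mem_filter.mp hu).2]),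
      ← Finset.sum_mul, ← map_sum, ← hBbi i, mul_assoc]
  -- Step C : expand and swap
  have hRHS2 : ∑ u ∈ filtD, C (χ (dot u a)) * ((1 + X : ℚ[X]) ^ (n - wt u) * (1 - X) ^ wt u)
      = C ((2:ℚ) ^ (n - Kdim)) * ∑ v ∈ cosetF, (X : ℚ[X]) ^ wt v := by
    calc ∑ u ∈ filtD, C (χ (dot u a)) * ((1 + X : ℚ[X]) ^ (n - wt u) * (1 - X) ^ wt u)
        = ∑ u ∈ filtD, ∑ v : Fin n → ZMod 2, C (χ (dot u (a + v))) * X ^ wt v := by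
          refine Finset.sum_congr rfl fun u _ => ?_
          rw [prod_expand, Finset.mul_sum]
          refine Finset.sum_congr rfl fun v _ => ?_
          rw [← mul_assoc, ← map_mul, ← chi_add, ← dot_add_right]
      _ = ∑ v : Fin n → ZMod 2, C (∑ u ∈ filtD, χ (dot u (a + v))) * X ^ wt v := by
          rw [Finset.sum_comm]
          refine Finset.sum_congr rfl fun v _ => ?_
          rw [map_sum, Finset.sum_mul]
      _ = ∑ v : Fin n → ZMod 2,
            (if v + a ∈ A then C ((2:ℚ) ^ (n - Kdim)) * X ^ wt v else 0) := by
          refine Finset.sum_congr rfl fun v _ => ?_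
          rw [hfiltD, dual_char_sum A (a + v), hK]
          by_cases h : a + v ∈ A
          · rw [if_pos h, if_pos (by rwa [add_comm] at h)]
          · rw [if_neg h, if_neg (by rwa [add_comm] at h), map_zero, zero_mul]
      _ = ∑ v ∈ cosetF, C ((2:ℚ) ^ (n - Kdim)) * X ^ wt v := by
          rw [hcosetF, Finset.sum_filter]
      _ = C ((2:ℚ) ^ (n - Kdim)) * ∑ v ∈ cosetF, (X : ℚ[X]) ^ wt v := by
          rw [Finset.mul_sum]
  -- Put it together
  rw [hLHS, hRHS1, hRHS2, ← mul_assoc, ← map_mul]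
  have hconst : (2 : ℚ) ^ ((Kdim : ℤ) - (n : ℤ)) * (2:ℚ) ^ (n - Kdim) = 1 := by
    rw [← zpow_natCast (2:ℚ) (n - Kdim),
      show ((n - Kdim : ℕ) : ℤ) = (n : ℤ) - Kdim by omega,
      ← zpow_add₀ (by norm_num : (2:ℚ) ≠ 0)]
    simp
  rw [hconst, map_one, one_mul]
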